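/- Let ε, f ∈ (0,1) be real numbers, Δ ≥ 1 a natural number, η·κ > 0 a real number, δ ∈ (0,1] with δ ≥ 2Δf + 4ε + 4Δ/(ηκ), c ∈ [0,1], and t ≥ 0, m > 0 real numbers with t ≤ c·(1−δ)·m. Set σ' = (1−ε)·(1−f)^Δ. Then for all real numbers L' ≥ ηκ, L = L' + Δ, and X', Z with Z < (1+ε)·(t/m)·(f/(1−f))·L and X' > (1−ε)·f·(1−f)^{Δ−1}·L', it holds that Z < (1 + δ/(2σ'))·(t/m)·X'. -/

import Mathlib

/-- Bounded-delay typical-execution bound (Lemma 5 d):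
`Z(S) < (1 + δ/(2σ'))·(t/E[n_alert])·X'(S')`. -/
theorem typical_execution_bounded_delay_d
    (ε f : ℝ) (hε : ε ∈ Set.Ioo (0:ℝ) 1) (hf : f ∈ Set.Ioo (0:ℝ) 1)
    (Δ : ℕ) (hΔ : 1 ≤ Δ) (ηκ : ℝ) (hηκ : 0 < ηκ)
    (δ : ℝ) (hδ : δ ∈ Set.Ioc (0:ℝ) 1)
    (hδ2 : 2 * Δ * f + 4 * ε + 4 * Δ / ηκ ≤ δ)
    (c : ℝ) (hc : c ∈ Set.Icc (0:ℝ) 1)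
    (t m : ℝ) (ht : 0 ≤ t) (hm : 0 < m) (htm : t ≤ c * (1 - δ) * m) :
    ∀ L' L X' Z : ℝ, ηκ ≤ L' → L = L' + Δ →
      Z < (1 + ε) * (t / m) * (f / (1 - f)) * L →
      X' > (1 - ε) * f * (1 - f) ^ (Δ - 1) * L' →
      Z < (1 + δ / (2 * ((1 - ε) * (1 - f) ^ Δ))) * (t / m) * X' := by
  obtain ⟨hε0, hε1⟩ := hε
  obtain ⟨hf0, hf1⟩ := hf
  obtain ⟨hδ0, hδ1⟩ := hδ
  intro L' L X' Z hL' hL hZ hX'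
  have h1f : (0:ℝ) < 1 - f := by linarith
  have h1ε : (0:ℝ) < 1 - ε := by linarith
  have hppos : 0 < (1 - f) ^ (Δ - 1) := pow_pos h1f _
  have hqpos : 0 < (1 - f) ^ Δ := pow_pos h1f _
  have hq : (1 - f) ^ Δ = (1 - f) ^ (Δ - 1) * (1 - f) := by
    rw [← pow_succ]; congr 1; omega
  have hbern : 1 - (Δ : ℝ) * f ≤ (1 - f) ^ Δ := by
    have h := one_add_mul_le_pow (a := -f) (by linarith) Δ
    have h2 : 1 + (Δ : ℝ) * (-f) = 1 - (Δ : ℝ) * f := by ring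
    rw [h2] at h
    exact le_trans h (le_of_eq (by ring))
  have hΔ1 : (1:ℝ) ≤ (Δ : ℝ) := by exact_mod_cast hΔ
  have hL'pos : 0 < L' := lt_of_lt_of_le hηκ hL'
  have hσpos : 0 < (1 - ε) * (1 - f) ^ Δ := mul_pos h1ε hqpos
  have hKpos : 0 < 1 + δ / (2 * ((1 - ε) * (1 - f) ^ Δ)) := by
    have h := div_pos hδ0 (by linarith : (0:ℝ) < 2 * ((1 - ε) * (1 - f) ^ Δ))
    linarith
  have hdiv : 2 * (Δ : ℝ) / ηκ * ηκ = 2 * Δ := div_mul_cancel₀ _ hηκ.ne'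
  have hcoef : 1 + ε + 2 * (Δ : ℝ) / ηκ ≤ (1 - ε) * (1 - f) ^ Δ + δ / 2 := by
    have h1 : (1 - ε) * (1 - (Δ:ℝ) * f) ≤ (1 - ε) * (1 - f) ^ Δ :=
      mul_le_mul_of_nonneg_left hbern h1ε.le
    have h2 : 0 ≤ ε * ((Δ:ℝ) * f) := mul_nonneg hε0.le (mul_nonneg (by linarith) hf0.le)
    have h3 : (1 - ε) * (1 - (Δ:ℝ) * f) = 1 - (Δ:ℝ) * f - ε + ε * ((Δ:ℝ) * f) := by ring
    have h4 : 2 * (Δ:ℝ) / ηκ = (4 * Δ / ηκ) / 2 := by ring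
    linarith
  have hkey : (1 + ε) * L ≤ ((1 - ε) * (1 - f) ^ Δ + δ / 2) * L' := by
    rw [hL]
    nlinarith [mul_le_mul_of_nonneg_right hcoef hL'pos.le,
      mul_le_mul_of_nonneg_left hL' (by positivity : (0:ℝ) ≤ 2 * (Δ:ℝ) / ηκ),
      hdiv, mul_nonneg (by linarith : (0:ℝ) ≤ 1 - ε) (by linarith : (0:ℝ) ≤ (Δ:ℝ))]
  have hid : (1 + δ / (2 * ((1 - ε) * (1 - f) ^ Δ))) * ((1 - ε) * f * (1 - f) ^ (Δ - 1)) =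
      ((1 - ε) * (1 - f) ^ Δ + δ / 2) * (f / (1 - f)) := by
    rw [hq]
    field_simp
  have hKB : (1 + ε) * (f / (1 - f)) * L ≤
      (1 + δ / (2 * ((1 - ε) * (1 - f) ^ Δ))) * X' := by
    have hfpos : 0 < f / (1 - f) := by positivity
    have h1 : (1 + ε) * (f / (1 - f)) * L ≤
        ((1 - ε) * (1 - f) ^ Δ + δ / 2) * (f / (1 - f)) * L' := by
      calc (1 + ε) * (f / (1 - f)) * L = (f / (1 - f)) * ((1 + ε) * L) := by ring
        _ ≤ (f / (1 - f)) * (((1 - ε) * (1 - f) ^ Δ + δ / 2) * L') :=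
            mul_le_mul_of_nonneg_left hkey hfpos.le
        _ = ((1 - ε) * (1 - f) ^ Δ + δ / 2) * (f / (1 - f)) * L' := by ring
    have h2 : ((1 - ε) * (1 - f) ^ Δ + δ / 2) * (f / (1 - f)) * L' =
        (1 + δ / (2 * ((1 - ε) * (1 - f) ^ Δ))) * ((1 - ε) * f * (1 - f) ^ (Δ - 1) * L') := by
      rw [← hid]; ring
    have h3 : (1 + δ / (2 * ((1 - ε) * (1 - f) ^ Δ))) * ((1 - ε) * f * (1 - f) ^ (Δ - 1) * L') ≤
        (1 + δ / (2 * ((1 - ε) * (1 - f) ^ Δ))) * X' :=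
      mul_le_mul_of_nonneg_left hX'.le hKpos.le
    linarith
  rcases eq_or_lt_of_le ht with h0 | htpos
  · have htm0 : t / m = 0 := by rw [← h0]; simp
    exact lt_of_lt_of_eq hZ (by rw [htm0]; ring)
  · have htm0 : 0 < t / m := div_pos htpos hm
    calc Z < (1 + ε) * (t / m) * (f / (1 - f)) * L := hZ
      _ = (t / m) * ((1 + ε) * (f / (1 - f)) * L) := by ring
      _ ≤ (t / m) * ((1 + δ / (2 * ((1 - ε) * (1 - f) ^ Δ))) * X') :=
          mul_le_mul_of_nonneg_left hKB htm0.le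
      _ = (1 + δ / (2 * ((1 - ε) * (1 - f) ^ Δ))) * (t / m) * X' := by ring
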